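/- arXiv:2312.00927 — 3 statements merged into one kernel-verified Lean document; each statement's English description precedes it below -/
import Mathlib

section
/- For every T > 0, m ≥ 1, κ ∈ ℕ and every strongly measurable f : [0,T] → X with ∫_0^T ‖f(s)‖^m ds < ∞, the shifted dyadic projection satisfies ‖Proĵ_κ f‖_{L^m(0,T;X)}^m ≤ ‖f‖_{L^m(0,T;X)}^m + (T/2^κ)·‖f(0)‖^m. -/
open MeasureTheory Set
open scoped ENNReal NNReal

/-- The shifted dyadic projection `Proĵ_κ`: it equals `f 0` on `[0, T/2^κ)`, and on
each dyadic interval `[T·k/2^κ, T·(k+1)/2^κ)` with `k ≥ 1` it takes the value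
`(2^κ/T) ∫_{t_{k-1}}^{t_k} f`. -/
noncomputable def shiftedProj {X : Type*} [NormedAddCommGroup X] [NormedSpace ℝ X]
    (T : ℝ) (κ : ℕ) (f : ℝ → X) (s : ℝ) : X :=
  if s < T / 2 ^ κ then f 0
  else ((2 : ℝ) ^ κ / T) •
    ∫ r in Ico (T * ((⌊s * 2 ^ κ / T⌋₊ : ℝ) - 1) / 2 ^ κ)
        (T * (⌊s * 2 ^ κ / T⌋₊ : ℝ) / 2 ^ κ), f r

/-- Splitting a lintegral over `[t 0, t n)` into dyadic-type pieces. -/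
lemma lintegral_Ico_sum_aux (t : ℕ → ℝ) (ht : Monotone t) (g : ℝ → ℝ≥0∞) :
    ∀ n : ℕ, ∫⁻ s in Ico (t 0) (t n), g s
      = ∑ k ∈ Finset.range n, ∫⁻ s in Ico (t k) (t (k + 1)), g s
  | 0 => by simp
  | (n + 1) => by
    rw [Finset.sum_range_succ, ← lintegral_Ico_sum_aux t ht g n,
      ← Set.Ico_union_Ico_eq_Ico (ht (Nat.zero_le n)) (ht (Nat.le_succ n)),
      lintegral_union measurableSet_Ico Set.Ico_disjoint_Ico_same]

/-- Jensen-type step: the `m`-th power of the norm of the average of `g` over a set of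
measure `c`, multiplied by `c`, is at most the integral of `‖g‖^m` over the set. -/
lemma jensen_step_aux {X : Type*} [NormedAddCommGroup X] [NormedSpace ℝ X]
    {m : ℝ} (hm : 1 ≤ m) {c : ℝ} (hc : 0 < c) {A : Set ℝ}
    (hAc : volume A = ENNReal.ofReal c) (g : ℝ → X)
    (hg : AEMeasurable (fun s => (‖g s‖₊ : ℝ≥0∞)) (volume.restrict A)) :
    (‖(c⁻¹ : ℝ) • ∫ r in A, g r‖₊ : ℝ≥0∞) ^ m * ENNReal.ofReal c
      ≤ ∫⁻ s in A, (‖g s‖₊ : ℝ≥0∞) ^ m := by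
  have hm0 : m ≠ 0 := by linarith
  have hm' : (0 : ℝ) ≤ m := by linarith
  set C := ENNReal.ofReal c with hC
  have hC0 : C ≠ 0 := by
    simp only [hC, ne_eq, ENNReal.ofReal_eq_zero, not_le]; exact hc
  have hCt : C ≠ ⊤ := ENNReal.ofReal_ne_top
  set I := ∫⁻ s in A, (‖g s‖₊ : ℝ≥0∞) ^ m with hI
  have h1 : (‖∫ r in A, g r‖₊ : ℝ≥0∞) ≤ I ^ (1 / m) * C ^ (1 - 1 / m) := by
    refine le_trans (enorm_integral_le_lintegral_enorm _) ?_
    rcases eq_or_lt_of_le hm with h | h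
    · rw [← h]
      simp [hI, ← h, ENNReal.rpow_one]
      exact le_rfl
    · have hpq : m.HolderConjugate (Real.conjExponent m) := Real.HolderConjugate.conjExponent h
      have key := ENNReal.lintegral_mul_le_Lp_mul_Lq (volume.restrict A) hpq hg
        (aemeasurable_const (b := (1 : ℝ≥0∞)))
      simp only [Pi.mul_apply, mul_one, ENNReal.one_rpow, lintegral_const,
        Measure.restrict_apply MeasurableSet.univ, univ_inter, hAc, one_mul] at key
      refine key.trans (le_of_eq ?_)
      congr 1
      rw [one_div m.conjExponent, ← hpq.one_sub_inv, one_div]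
  have h2 : (‖(c⁻¹ : ℝ) • ∫ r in A, g r‖₊ : ℝ≥0∞)
      = C⁻¹ * (‖∫ r in A, g r‖₊ : ℝ≥0∞) := by
    rw [nnnorm_smul]
    push_cast
    rw [show (‖c⁻¹‖₊ : ℝ≥0∞) = ENNReal.ofReal c⁻¹ from Real.enorm_eq_ofReal (by positivity), ENNReal.ofReal_inv_of_pos hc]
  calc (‖(c⁻¹ : ℝ) • ∫ r in A, g r‖₊ : ℝ≥0∞) ^ m * C
      ≤ (C⁻¹ * (I ^ (1 / m) * C ^ (1 - 1 / m))) ^ m * C := by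
        rw [h2]; gcongr
    _ = I := by
        rw [ENNReal.mul_rpow_of_nonneg _ _ hm', ENNReal.mul_rpow_of_nonneg _ _ hm',
          ← ENNReal.rpow_mul I, one_div, inv_mul_cancel₀ hm0, ENNReal.rpow_one,
          ← ENNReal.rpow_neg_one C, ← ENNReal.rpow_mul, ← ENNReal.rpow_mul]
        have hring : C ^ (-1 * m) * (I * C ^ ((1 - m⁻¹) * m)) * C
            = I * (C ^ (-1 * m) * C ^ ((1 - m⁻¹) * m) * C ^ (1 : ℝ)) := by
          rw [ENNReal.rpow_one]; ring
        rw [hring, ← ENNReal.rpow_add _ _ hC0 hCt, ← ENNReal.rpow_add _ _ hC0 hCt]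
        have hexp : -1 * m + (1 - m⁻¹) * m + 1 = 0 := by field_simp; ring
        rw [hexp, ENNReal.rpow_zero, mul_one]

/-- For every `T > 0`, `m ≥ 1`, `κ ∈ ℕ` and every strongly measurable
`f : [0,T] → X` with `∫_0^T ‖f(s)‖^m ds < ∞`, the shifted dyadic projection satisfies
`‖Proĵ_κ f‖_{L^m(0,T;X)}^m ≤ ‖f‖_{L^m(0,T;X)}^m + (T/2^κ)·‖f(0)‖^m`. -/
theorem shiftedProj_Lm_pow_le {X : Type*} [NormedAddCommGroup X] [NormedSpace ℝ X]
    (T : ℝ) (hT : 0 < T) (m : ℝ) (hm : 1 ≤ m) (κ : ℕ) (f : ℝ → X)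
    (hf : AEStronglyMeasurable f (volume.restrict (Ioc 0 T)))
    (hfm : ∫⁻ s in Ioc (0 : ℝ) T, (‖f s‖₊ : ℝ≥0∞) ^ m < ⊤) :
    ∫⁻ s in Ioc (0 : ℝ) T, (‖shiftedProj T κ f s‖₊ : ℝ≥0∞) ^ m
      ≤ (∫⁻ s in Ioc (0 : ℝ) T, (‖f s‖₊ : ℝ≥0∞) ^ m) +
        ENNReal.ofReal (T / 2 ^ κ) * (‖f 0‖₊ : ℝ≥0∞) ^ m := by
  have h2κ : (0 : ℝ) < 2 ^ κ := by positivity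
  have hc : (0 : ℝ) < T / 2 ^ κ := by positivity
  set c : ℝ := T / 2 ^ κ with hcdef
  set t : ℕ → ℝ := fun k => T * k / 2 ^ κ with htdef
  have htmono : Monotone t := by
    intro a b hab
    have : (a : ℝ) ≤ b := Nat.cast_le.mpr hab
    dsimp only [t]
    gcongr
  have ht0 : t 0 = 0 := by simp [t]
  have ht1 : t 1 = c := by simp [t, c]
  have htdiff : ∀ k : ℕ, t (k + 1) - t k = c := by
    intro k
    dsimp only [t]
    rw [hcdef]
    push_cast
    field_simp
    try ring
  set N := 2 ^ κ with hNdef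
  have htN : t N = T := by
    dsimp only [t]
    rw [hNdef]
    push_cast
    field_simp
  have ht_nonneg : ∀ k, 0 ≤ t k := fun k => ht0 ▸ htmono (Nat.zero_le k)
  have ht_le_T : ∀ k, k ≤ N → t k ≤ T := fun k hk => htN ▸ htmono hk
  have hNpos : 0 < N := Nat.pow_pos (by norm_num)
  have hvolIco : ∀ k : ℕ, volume (Ico (t k) (t (k + 1))) = ENNReal.ofReal c := by
    intro k
    rw [Real.volume_Ico, htdiff k]
  -- the projection is constant on each dyadic interval
  have hproj0 : ∀ s ∈ Ico (t 0) (t 1), shiftedProj T κ f s = f 0 := by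
    intro s hs
    rw [shiftedProj, if_pos]
    rw [ht1] at hs
    exact hs.2
  have hprojk : ∀ j : ℕ, ∀ s ∈ Ico (t (j + 1)) (t (j + 2)),
      shiftedProj T κ f s = (c⁻¹ : ℝ) • ∫ r in Ico (t j) (t (j + 1)), f r := by
    intro j s hs
    have hs1 : T * (j + 1 : ℝ) / 2 ^ κ ≤ s := by
      have := hs.1; dsimp only [t] at this; push_cast at this; linarith
    have hs2 : s < T * ((j : ℝ) + 2) / 2 ^ κ := by
      have := hs.2; dsimp only [t] at this; push_cast at this; linarith
    have hsnn : 0 ≤ s := le_trans (by positivity) hs1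
    have hfloor : ⌊s * 2 ^ κ / T⌋₊ = j + 1 := by
      rw [Nat.floor_eq_iff (by positivity)]
      constructor
      · push_cast
        rw [le_div_iff₀ hT]
        rw [div_le_iff₀ h2κ] at hs1
        linarith
      · push_cast
        rw [div_lt_iff₀ hT]
        rw [lt_div_iff₀ h2κ] at hs2
        linarith
    have hnotlt : ¬ s < T / 2 ^ κ := by
      push_neg
      have h1j : T / 2 ^ κ ≤ T * ((j : ℝ) + 1) / 2 ^ κ := by
        refine (div_le_div_iff_of_pos_right h2κ).mpr ?_
        nlinarith [Nat.cast_nonneg (α := ℝ) j]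
      have : T * ((j : ℝ) + 1) / 2 ^ κ = T * (j + 1 : ℝ) / 2 ^ κ := by push_cast; ring
      linarith [hs1]
    rw [shiftedProj, if_neg hnotlt, hfloor]
    have e1 : T * ((↑(j + 1) : ℝ) - 1) / 2 ^ κ = t j := by
      dsimp only [t]; push_cast; try ring
    have e2 : T * ((↑(j + 1) : ℝ)) / 2 ^ κ = t (j + 1) := by
      dsimp only [t]
    rw [e1, e2, hcdef, inv_div]
  -- measurability of `‖f‖` on the dyadic subintervals
  have hmeas : ∀ j : ℕ, j + 1 ≤ N →
      AEMeasurable (fun s => (‖f s‖₊ : ℝ≥0∞)) (volume.restrict (Ico (t j) (t (j + 1)))) := by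
    intro j hj
    refine hf.enorm.mono_measure (Measure.restrict_mono_ae ?_)
    rw [ae_le_set]
    refine measure_mono_null ?_ (measure_singleton (0 : ℝ))
    rintro x ⟨⟨hx1, hx2⟩, hx3⟩
    have hxT : x ≤ T := le_trans hx2.le (ht_le_T (j + 1) hj)
    have hx0 : ¬ (0 : ℝ) < x := fun h => hx3 ⟨h, hxT⟩
    have : x = 0 := le_antisymm (not_lt.mp hx0) (le_trans (ht_nonneg j) hx1)
    simp [this]
  -- main computation
  calc ∫⁻ s in Ioc (0 : ℝ) T, (‖shiftedProj T κ f s‖₊ : ℝ≥0∞) ^ m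
      = ∫⁻ s in Ico (t 0) (t N), (‖shiftedProj T κ f s‖₊ : ℝ≥0∞) ^ m := by
        rw [ht0, htN]
        exact (setLIntegral_congr Ico_ae_eq_Ioc).symm
    _ = ∑ k ∈ Finset.range N, ∫⁻ s in Ico (t k) (t (k + 1)),
          (‖shiftedProj T κ f s‖₊ : ℝ≥0∞) ^ m :=
        lintegral_Ico_sum_aux t htmono _ N
    _ = (∑ j ∈ Finset.range (N - 1), ∫⁻ s in Ico (t (j + 1)) (t (j + 2)),
          (‖shiftedProj T κ f s‖₊ : ℝ≥0∞) ^ m)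
        + ∫⁻ s in Ico (t 0) (t 1), (‖shiftedProj T κ f s‖₊ : ℝ≥0∞) ^ m := by
        rw [show N = (N - 1) + 1 from (Nat.succ_pred_eq_of_pos hNpos).symm,
          Finset.sum_range_succ']
        rfl
    _ ≤ (∑ j ∈ Finset.range (N - 1), ∫⁻ s in Ico (t j) (t (j + 1)),
          (‖f s‖₊ : ℝ≥0∞) ^ m)
        + ENNReal.ofReal c * (‖f 0‖₊ : ℝ≥0∞) ^ m := by
        refine add_le_add (Finset.sum_le_sum ?_) ?_
        · intro j hj
          have hj' : j + 1 ≤ N := by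
            have := Finset.mem_range.mp hj
            omega
          rw [setLIntegral_congr_fun measurableSet_Ico
            (fun s hs => by rw [hprojk j s hs]),
            setLIntegral_const, hvolIco (j + 1)]
          exact jensen_step_aux hm hc (hvolIco j) f (hmeas j hj')
        · rw [setLIntegral_congr_fun measurableSet_Ico
            (fun s hs => by rw [hproj0 s hs]),
            setLIntegral_const, hvolIco 0, mul_comm]
    _ ≤ (∫⁻ s in Ioc (0 : ℝ) T, (‖f s‖₊ : ℝ≥0∞) ^ m)
        + ENNReal.ofReal c * (‖f 0‖₊ : ℝ≥0∞) ^ m := by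
        refine add_le_add_left ?_ _
        rw [← lintegral_Ico_sum_aux t htmono _ (N - 1), ht0,
          ← setLIntegral_congr (Ioo_ae_eq_Ico (a := (0:ℝ)) (b := t (N - 1)))]
        exact lintegral_mono_set
          ((Ioo_subset_Ioc_self).trans (Ioc_subset_Ioc_right (ht_le_T _ (Nat.pred_le N))))
end

section
/- Let S be a Polish space equipped with its Borel σ-algebra 𝒮, and let (S_n)_{n∈ℕ} ⊆ 𝒮 be an increasing sequence of measurable sets with ⋃_n S_n = S. Let M be the set of all measures θ on (S, 𝒮) that take values in ℕ ∪ {∞} (i.e., for every B ∈ 𝒮, either θ(B) = ∞ or θ(B) ∈ ℕ) and satisfy θ(S_n) < ∞ for every n ∈ ℕ, and equip M with the σ-algebra ℳ generated by the evaluation maps i_B : M → ℕ ∪ {∞}, θ ↦ θ(B), for B ∈ 𝒮. Then the measurable space (M, ℳ) is Polish, i.e., there exists a Polish topology on M whose Borel σ-algebra equals ℳ (M is a standard Borel space). -/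
open MeasureTheory
open scoped ENNReal

/-- The set of `(ℕ ∪ {∞})`-valued measures `θ` on a measurable space `S` which are
finite on each member of the exhausting family `Sn`. -/
def NatValuedMeasures (S : Type*) [MeasurableSpace S] (Sn : ℕ → Set S) : Type _ :=
  {θ : Measure S // (∀ B : Set S, MeasurableSet B → θ B = ⊤ ∨ ∃ k : ℕ, θ B = k) ∧
    ∀ n : ℕ, θ (Sn n) < ⊤}

/-- The σ-algebra `ℳ` on `NatValuedMeasures S Sn` generated by the evaluation maps
`i_B : θ ↦ θ(B)`, `B` measurable. -/
def evalSigmaAlgebra (S : Type*) [MeasurableSpace S] (Sn : ℕ → Set S) :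
    MeasurableSpace (NatValuedMeasures S Sn) :=
  ⨆ (B : Set S) (_ : MeasurableSet B),
    MeasurableSpace.comap (fun θ : NatValuedMeasures S Sn => (θ.val : Measure S) B)
      inferInstance

section NVMAux
open Set

namespace NVM


noncomputable def rq (q : ℚ) : ℝ≥0∞ := (Real.toNNReal q : ℝ≥0∞)

/-- the `j`-th quantile of a measure on `ℝ≥0∞`. -/
noncomputable def quant (ν : Measure ℝ≥0∞) (j : ℕ) : ℝ≥0∞ :=
  ⨅ (q : ℚ) (_ : (j : ℝ≥0∞) ≤ ν (Iic (rq q))), rq q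

lemma rq_mono {q q' : ℚ} (h : q ≤ q') : rq q ≤ rq q' := by
  simp only [rq, ENNReal.coe_le_coe]
  exact Real.toNNReal_mono (by exact_mod_cast h)

variable {ν : Measure ℝ≥0∞}

lemma iUnion_Iic_rq : (⋃ q : ℚ, Iic (rq q)) = {(⊤ : ℝ≥0∞)}ᶜ := by
  ext x
  simp only [mem_iUnion, mem_Iic, mem_compl_iff, mem_singleton_iff]
  constructor
  · rintro ⟨q, hq⟩ rfl
    exact absurd (top_le_iff.mp hq) (by simp [rq])
  · intro hx
    obtain ⟨n, hn⟩ := ENNReal.exists_nat_gt hx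
    refine ⟨(n : ℚ), hn.le.trans ?_⟩
    simp [rq]

lemma measure_compl_top (htop : ν {⊤} = 0) : ν ({(⊤:ℝ≥0∞)}ᶜ) = ν univ := by
  refine le_antisymm (measure_mono (subset_univ _)) ?_
  calc ν univ = ν ({(⊤:ℝ≥0∞)}ᶜ ∪ {⊤}) := by rw [compl_union_self]
  _ ≤ ν ({(⊤:ℝ≥0∞)}ᶜ) + ν {⊤} := measure_union_le _ _
  _ = ν ({(⊤:ℝ≥0∞)}ᶜ) := by rw [htop, add_zero]

/-- there is a rational quantile candidate -/
lemma exists_rq_le (hfin : ν univ ≠ ⊤)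
    (hnat : ∀ B, MeasurableSet B → ∃ k : ℕ, ν B = k) (htop : ν {⊤} = 0)
    {j : ℕ} (hj1 : 1 ≤ j) (hjN : (j : ℝ≥0∞) ≤ ν univ) :
    ∃ q : ℚ, (j : ℝ≥0∞) ≤ ν (Iic (rq q)) := by
  by_contra h
  push_neg at h
  have hsup : ν univ = ⨆ q : ℚ, ν (Iic (rq q)) := by
    rw [← measure_compl_top htop, ← iUnion_Iic_rq]
    refine Directed.measure_iUnion ?_
    intro q₁ q₂
    refine ⟨max q₁ q₂, Iic_subset_Iic.mpr (rq_mono (le_max_left _ _)),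
      Iic_subset_Iic.mpr (rq_mono (le_max_right _ _))⟩
  have : ∀ q : ℚ, ν (Iic (rq q)) ≤ ((j - 1 : ℕ) : ℝ≥0∞) := by
    intro q
    obtain ⟨k, hk⟩ := hnat _ measurableSet_Iic
    rw [hk]
    have : k < j := by
      by_contra hc
      exact absurd (hk ▸ (by exact_mod_cast not_lt.mp hc : (j : ℝ≥0∞) ≤ (k : ℝ≥0∞))) (not_le.mpr (h q))
    exact_mod_cast Nat.le_sub_one_of_lt this
  have : ν univ ≤ ((j - 1 : ℕ) : ℝ≥0∞) := hsup ▸ iSup_le this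
  have hlt : ((j - 1 : ℕ) : ℝ≥0∞) < (j : ℝ≥0∞) := by
    exact_mod_cast Nat.sub_lt hj1 one_pos
  exact absurd (hjN.trans this) (not_le.mpr hlt)


/-- the quantile is realized as an intersection of `Iic`s. -/
lemma measure_Iic_quant (hfin : ν univ ≠ ⊤) {j : ℕ}
    (hne : ∃ q : ℚ, (j : ℝ≥0∞) ≤ ν (Iic (rq q))) :
    (j : ℝ≥0∞) ≤ ν (Iic (quant ν j)) := by
  have hq : quant ν j = ⨅ q : {q : ℚ // (j : ℝ≥0∞) ≤ ν (Iic (rq q))}, rq q.1 := by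
    rw [quant, iInf_subtype]
  have hIic : Iic (quant ν j) = ⋂ q : {q : ℚ // (j : ℝ≥0∞) ≤ ν (Iic (rq q))}, Iic (rq q.1) := by
    rw [hq]; ext x; simp [le_iInf_iff]
  haveI : Nonempty {q : ℚ // (j : ℝ≥0∞) ≤ ν (Iic (rq q))} := ⟨⟨hne.choose, hne.choose_spec⟩⟩
  rw [hIic, Directed.measure_iInter]
  · exact le_iInf fun q => q.2
  · exact fun q => measurableSet_Iic.nullMeasurableSet
  · intro q₁ q₂
    rcases le_total q₁.1 q₂.1 with h | h
    · exact ⟨q₁, subset_rfl, Iic_subset_Iic.mpr (rq_mono h)⟩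
    · exact ⟨q₂, Iic_subset_Iic.mpr (rq_mono h), subset_rfl⟩
  · obtain ⟨q⟩ := ‹Nonempty {q : ℚ // (j : ℝ≥0∞) ≤ ν (Iic (rq q))}›
    exact ⟨q, fun h => hfin (top_le_iff.mp (h ▸ measure_mono (subset_univ _)))⟩

lemma not_le_of_lt_quant {j : ℕ} {x : ℝ≥0∞} (hx : x < quant ν j) :
    ¬ ((j : ℝ≥0∞) ≤ ν (Iic x)) := by
  intro hle
  obtain ⟨q, -, hq1, hq2⟩ := ENNReal.lt_iff_exists_rat_btwn.mp hx
  have : quant ν j ≤ rq q :=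
    iInf_le_of_le q (iInf_le _ (le_trans hle (measure_mono (Iic_subset_Iic.mpr hq1.le))))
  exact absurd (this.trans_lt hq2) (lt_irrefl _)

lemma quant_mono (ν : Measure ℝ≥0∞) {j j' : ℕ} (h : j ≤ j') : quant ν j ≤ quant ν j' := by
  refine le_iInf fun q => le_iInf fun hq => iInf_le_of_le q (iInf_le _ (le_trans ?_ hq))
  exact_mod_cast Nat.cast_le.mpr h

/-- counting lemma: if quantiles `l` and `r` agree, the common value is an atom of
mass at least `r - l + 1`. -/
lemma count_le_measure_singleton (hfin : ν univ ≠ ⊤)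
    (hnat : ∀ B, MeasurableSet B → ∃ k : ℕ, ν B = k) (htop : ν {⊤} = 0)
    {l r : ℕ} (hl1 : 1 ≤ l) (hlr : l ≤ r) (hrN : (r : ℝ≥0∞) ≤ ν univ)
    {x : ℝ≥0∞} (hxl : quant ν l = x) (hxr : quant ν r = x) :
    ((r - l + 1 : ℕ) : ℝ≥0∞) ≤ ν {x} := by
  -- ν (Iic x) ≥ r
  have hFr : (r : ℝ≥0∞) ≤ ν (Iic x) := by
    rw [← hxr]
    exact measure_Iic_quant hfin (exists_rq_le hfin hnat htop (hl1.trans hlr) hrN)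
  -- ν (Iio x) ≤ l - 1
  have hIio : ν (Iio x) ≤ ((l - 1 : ℕ) : ℝ≥0∞) := by
    have hIio_eq : Iio x = ⋃ q : {q : ℚ // rq q < x}, Iic (rq q.1) := by
      ext z
      simp only [mem_Iio, mem_iUnion, mem_Iic]
      constructor
      · intro hz
        obtain ⟨q, -, h1, h2⟩ := ENNReal.lt_iff_exists_rat_btwn.mp hz
        exact ⟨⟨q, h2⟩, h1.le⟩
      · rintro ⟨q, hq⟩
        exact hq.trans_lt q.2
    rw [hIio_eq]
    rcases isEmpty_or_nonempty {q : ℚ // rq q < x} with hempty | hnonempty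
    · simp
    rw [Directed.measure_iUnion]
    · refine iSup_le fun q => ?_
      obtain ⟨k, hk⟩ := hnat (Iic (rq q.1)) measurableSet_Iic
      rw [hk]
      have : ¬ ((l : ℝ≥0∞) ≤ ν (Iic (rq q.1))) := not_le_of_lt_quant (hxl ▸ q.2)
      rw [hk] at this
      have hkl : k < l := by exact_mod_cast not_le.mp this
      exact_mod_cast Nat.le_sub_one_of_lt hkl
    · intro q₁ q₂
      rcases le_total q₁.1 q₂.1 with h | h
      · exact ⟨q₂, Iic_subset_Iic.mpr (rq_mono h), subset_rfl⟩
      · exact ⟨q₁, subset_rfl, Iic_subset_Iic.mpr (rq_mono h)⟩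
  -- combine
  obtain ⟨p, hp⟩ := hnat (Iio x) measurableSet_Iio
  obtain ⟨m, hm⟩ := hnat {x} (measurableSet_singleton x)
  obtain ⟨f, hf⟩ := hnat (Iic x) measurableSet_Iic
  have hsplit : ν (Iio x) + ν {x} = ν (Iic x) := by
    rw [← measure_union (by simp) (measurableSet_singleton x), Iio_union_right]
  rw [hp, hm, hf] at hsplit
  rw [hp] at hIio
  rw [hf] at hFr
  have h1 : p + m = f := by exact_mod_cast hsplit
  have h2 : p ≤ l - 1 := by exact_mod_cast hIio
  have h3 : r ≤ f := by exact_mod_cast hFr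
  rw [hm]
  exact_mod_cast (by omega : r - l + 1 ≤ m)


open Classical in
/-- decomposition of a finite `ℕ`-valued measure on `ℝ≥0∞` into Dirac masses at its
quantiles. -/
theorem quant_spec (ν : Measure ℝ≥0∞) (hfin : ν univ ≠ ⊤)
    (hnat : ∀ B, MeasurableSet B → ∃ k : ℕ, ν B = k) (htop : ν {⊤} = 0) :
    ν = Measure.sum (fun j : ℕ =>
      if 1 ≤ j ∧ (j : ℝ≥0∞) ≤ ν univ then Measure.dirac (quant ν j) else 0) := by
  obtain ⟨N, hN⟩ := hnat univ MeasurableSet.univ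
  set g := fun j : ℕ =>
    if 1 ≤ j ∧ (j : ℝ≥0∞) ≤ ν univ then Measure.dirac (quant ν j) else 0 with hg
  have hcond : ∀ j : ℕ, (1 ≤ j ∧ (j : ℝ≥0∞) ≤ ν univ) ↔ j ∈ Finset.Icc 1 N := by
    intro j
    rw [Finset.mem_Icc, hN]
    exact and_congr Iff.rfl (by exact_mod_cast Iff.rfl)
  -- evaluation of the dirac sum
  have hκ : ∀ B : Set ℝ≥0∞, MeasurableSet B →
      (Measure.sum g) B = ∑ j ∈ Finset.Icc 1 N, B.indicator 1 (quant ν j) := by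
    intro B hB
    rw [Measure.sum_apply _ hB]
    rw [tsum_eq_sum (s := Finset.Icc 1 N) (fun j hj => by
      simp only [hg]
      rw [if_neg (fun hc => hj ((hcond j).mp hc))]
      rfl)]
    refine Finset.sum_congr rfl fun j hj => ?_
    simp only [hg]
    rw [if_pos ((hcond j).mpr hj), Measure.dirac_apply' _ hB]
  -- upper bound : the dirac sum is dominated by ν
  have hle : ∀ B : Set ℝ≥0∞, MeasurableSet B → (Measure.sum g) B ≤ ν B := by
    intro B hB
    rw [hκ B hB]
    set T := (Finset.Icc 1 N).filter (fun j => quant ν j ∈ B) with hT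
    have hsum : ∑ j ∈ Finset.Icc 1 N, B.indicator 1 (quant ν j) = (T.card : ℝ≥0∞) := by
      rw [hT, ← Finset.sum_boole]
      refine Finset.sum_congr rfl fun j _ => ?_
      by_cases h : quant ν j ∈ B <;> simp [h]
    rw [hsum]
    set V := T.image (quant ν) with hV
    have hcard : T.card = ∑ x ∈ V, (T.filter (fun j => quant ν j = x)).card :=
      Finset.card_eq_sum_card_image _ _
    have hVsub : ∀ x ∈ V, x ∈ B := by
      intro x hx
      obtain ⟨j, hj, rfl⟩ := Finset.mem_image.mp hx
      exact (Finset.mem_filter.mp hj).2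
    have hxcount : ∀ x ∈ V, ((T.filter (fun j => quant ν j = x)).card : ℝ≥0∞) ≤ ν {x} := by
      intro x hx
      set J := T.filter (fun j => quant ν j = x) with hJ
      have hJne : J.Nonempty := by
        obtain ⟨j, hj, hjx⟩ := Finset.mem_image.mp hx
        exact ⟨j, Finset.mem_filter.mpr ⟨hj, hjx⟩⟩
      set l := J.min' hJne
      set r := J.max' hJne
      have hmem : ∀ j ∈ J, j ∈ Finset.Icc 1 N ∧ quant ν j = x := by
        intro j hj
        obtain ⟨hj1, hj2⟩ := Finset.mem_filter.mp hj
        exact ⟨(Finset.mem_filter.mp hj1).1, hj2⟩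
      have hlmem := hmem l (J.min'_mem hJne)
      have hrmem := hmem r (J.max'_mem hJne)
      have hl1 : 1 ≤ l := (Finset.mem_Icc.mp hlmem.1).1
      have hrN : r ≤ N := (Finset.mem_Icc.mp hrmem.1).2
      have hlr : l ≤ r := J.min'_le r (J.max'_mem hJne)
      have hcount := count_le_measure_singleton hfin hnat htop hl1 hlr
        (by rw [hN]; exact_mod_cast hrN) hlmem.2 hrmem.2
      refine le_trans ?_ hcount
      have hsub : J ⊆ Finset.Icc l r :=
        fun j hj => Finset.mem_Icc.mpr ⟨J.min'_le j hj, J.le_max' j hj⟩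
      have := Finset.card_le_card hsub
      rw [Nat.card_Icc] at this
      exact_mod_cast this.trans (by omega)
    calc (T.card : ℝ≥0∞) = ∑ x ∈ V, ((T.filter (fun j => quant ν j = x)).card : ℝ≥0∞) := by
          rw [hcard]; push_cast; rfl
    _ ≤ ∑ x ∈ V, ν {x} := Finset.sum_le_sum hxcount
    _ = ν (⋃ x ∈ V, {x}) := by
          rw [measure_biUnion_finset (fun x _ y _ hxy => Set.disjoint_singleton.mpr hxy)
            (fun x _ => measurableSet_singleton x)]
    _ ≤ ν B := measure_mono
          (iUnion₂_subset fun x hx => singleton_subset_iff.mpr (hVsub x hx))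
  -- total masses agree
  have huniv : (Measure.sum g) univ = ν univ := by
    rw [hκ univ MeasurableSet.univ, hN]
    simp only [indicator_univ, Pi.one_apply]
    rw [Finset.sum_const, Nat.card_Icc]
    simp [nsmul_eq_mul, mul_comm]
  -- conclude
  refine Measure.ext fun B hB => ?_
  have h1 : (Measure.sum g) B ≤ ν B := hle B hB
  have h2 : (Measure.sum g) Bᶜ ≤ ν Bᶜ := hle Bᶜ hB.compl
  have h3 : (Measure.sum g) B + (Measure.sum g) Bᶜ = ν B + ν Bᶜ := by
    rw [measure_add_measure_compl hB, measure_add_measure_compl hB, huniv]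
  have hfB : ν B ≠ ⊤ := fun h => hfin (top_le_iff.mp (h ▸ measure_mono (subset_univ _)))
  have hfBc : ν Bᶜ ≠ ⊤ := fun h => hfin (top_le_iff.mp (h ▸ measure_mono (subset_univ _)))
  -- from h1 h2 h3 conclude equality
  have h4 : (Measure.sum g) Bᶜ = ν Bᶜ := by
    by_contra hne
    have : (Measure.sum g) B + (Measure.sum g) Bᶜ < ν B + ν Bᶜ :=
      ENNReal.add_lt_add_of_le_of_lt (ne_top_of_le_ne_top hfB h1) h1 (lt_of_le_of_ne h2 hne)
    exact absurd h3 this.ne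
  rw [h4] at h3
  exact ((ENNReal.add_left_inj hfBc).mp h3).symm
  
/-- each selected quantile is an atom. -/
theorem one_le_measure_quant (ν : Measure ℝ≥0∞) (hfin : ν univ ≠ ⊤)
    (hnat : ∀ B, MeasurableSet B → ∃ k : ℕ, ν B = k) (htop : ν {⊤} = 0)
    {j : ℕ} (hj : 1 ≤ j ∧ (j : ℝ≥0∞) ≤ ν univ) :
    1 ≤ ν {quant ν j} := by
  have h := Measure.le_iff'.mp (Measure.le_sum (fun j : ℕ =>
      if 1 ≤ j ∧ (j : ℝ≥0∞) ≤ ν univ then Measure.dirac (quant ν j) else 0) j) {quant ν j}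
  rw [← quant_spec ν hfin hnat htop, if_pos hj,
    Measure.dirac_apply' _ (measurableSet_singleton _),
    Set.indicator_of_mem (mem_singleton _)] at h
  exact h


/-! ### shells -/

variable {S : Type*} [MeasurableSpace S]

def shell (Sn : ℕ → Set S) : ℕ → Set S
  | 0 => Sn 0
  | (n + 1) => Sn (n + 1) \ Sn n

lemma shell_subset (Sn : ℕ → Set S) (n : ℕ) : shell Sn n ⊆ Sn n := by
  cases n with
  | zero => exact subset_rfl
  | succ k => exact diff_subset

lemma measurableSet_shell {Sn : ℕ → Set S} (hSn : ∀ n, MeasurableSet (Sn n)) (n : ℕ) :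
    MeasurableSet (shell Sn n) := by
  cases n with
  | zero => exact hSn 0
  | succ k => exact (hSn (k + 1)).diff (hSn k)

lemma disjoint_shell_of_lt {Sn : ℕ → Set S} (hmono : Monotone Sn) {m n : ℕ} (h : m < n) :
    Disjoint (shell Sn m) (shell Sn n) := by
  obtain ⟨k, rfl⟩ := Nat.exists_eq_add_of_lt h
  refine Set.disjoint_left.mpr fun x hxm hxn => ?_
  have hx1 : x ∈ Sn (m + k) := hmono (by omega) ((shell_subset Sn m) hxm)
  exact (by exact hxn.2 : x ∉ Sn (m + k)) hx1

lemma pairwise_disjoint_shell {Sn : ℕ → Set S} (hmono : Monotone Sn) :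
    Pairwise (Function.onFun Disjoint (shell Sn)) := by
  intro m n hmn
  rcases lt_or_gt_of_ne hmn with h | h
  · exact disjoint_shell_of_lt hmono h
  · exact (disjoint_shell_of_lt hmono h).symm

lemma iUnion_shell {Sn : ℕ → Set S} (hexh : ⋃ n, Sn n = univ) :
    ⋃ n, shell Sn n = univ := by
  classical
  refine eq_univ_of_forall fun x => ?_
  have hx : ∃ n, x ∈ Sn n := by
    have := mem_univ x
    rw [← hexh] at this
    exact mem_iUnion.mp this
  have hfind := Nat.find_spec hx
  rcases hn : Nat.find hx with _ | k
  · exact mem_iUnion.mpr ⟨0, by rw [hn] at hfind; exact hfind⟩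
  · refine mem_iUnion.mpr ⟨k + 1, ?_⟩
    rw [hn] at hfind
    exact ⟨hfind, Nat.find_min hx (by omega)⟩

/-! ### `ℕ`-valued tsums -/

lemma tsum_natCast_mem {ι : Type*} [Countable ι] (f : ι → ℕ) :
    (∑' i, (f i : ℝ≥0∞)) = ⊤ ∨ ∃ k : ℕ, (∑' i, (f i : ℝ≥0∞)) = k := by
  by_cases h : (∑' i, (f i : ℝ≥0∞)) = ⊤
  · exact Or.inl h
  right
  have hfin : {i | 1 ≤ (f i : ℝ≥0∞)}.Finite :=
    ENNReal.finite_const_le_of_tsum_ne_top h one_ne_zero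
  have hsupp : ∀ i ∉ hfin.toFinset, ((f i : ℝ≥0∞)) = 0 := by
    intro i hi
    rw [Set.Finite.mem_toFinset] at hi
    simp only [mem_setOf_eq, not_le] at hi
    have : f i = 0 := by exact_mod_cast Nat.lt_one_iff.mp (by exact_mod_cast hi)
    simp [this]
  rw [tsum_eq_sum hsupp]
  exact ⟨∑ i ∈ hfin.toFinset, f i, by push_cast; rfl⟩

/-! ### the measure associated to a family of weighted points -/

noncomputable def psiMeas (s : (ℕ × ℕ) → S × ℕ) : Measure S :=
  Measure.sum (fun p => ((s p).2 : ℝ≥0∞) • Measure.dirac (s p).1)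

lemma psiMeas_apply (s : (ℕ × ℕ) → S × ℕ) {B : Set S} (hB : MeasurableSet B) :
    psiMeas s B = ∑' p, ((s p).2 : ℝ≥0∞) * B.indicator 1 (s p).1 := by
  rw [psiMeas, Measure.sum_apply _ hB]
  refine tsum_congr fun p => ?_
  rw [Measure.smul_apply, Measure.dirac_apply' _ hB, smul_eq_mul]

lemma psiMeas_natValued (s : (ℕ × ℕ) → S × ℕ) :
    ∀ B, MeasurableSet B → psiMeas s B = ⊤ ∨ ∃ k : ℕ, psiMeas s B = k := by
  intro B hB
  classical
  rw [psiMeas_apply s hB]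
  have hterm : ∀ p : ℕ × ℕ, ((s p).2 : ℝ≥0∞) * B.indicator 1 (s p).1 =
      ((((s p).2 * if (s p).1 ∈ B then 1 else 0 : ℕ) : ℝ≥0∞)) := by
    intro p
    by_cases h : (s p).1 ∈ B
    · simp [Set.indicator_of_mem h, h]
    · simp [Set.indicator_of_notMem h, h]
  simp_rw [hterm]
  exact tsum_natCast_mem _

/-! ### the canonical atom listing -/

open Classical in
noncomputable def phiRaw (Sn : ℕ → Set S) (e : S → ℝ≥0∞) (G : ℝ≥0∞ → S) (x₀ : S)
    (θ : Measure S) : (ℕ × ℕ) → S × ℕ := fun p =>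
  if 1 ≤ p.2 ∧ (p.2 : ℝ≥0∞) ≤ θ (shell Sn p.1) then
    (G (quant ((θ.restrict (shell Sn p.1)).map e) p.2), 1) else (x₀, 0)

theorem psiMeas_phiRaw {Sn : ℕ → Set S} (hSn : ∀ n, MeasurableSet (Sn n))
    (hmono : Monotone Sn) (hexh : ⋃ n, Sn n = univ) {e : S → ℝ≥0∞}
    (he : MeasurableEmbedding e) (hetop : ∀ x, e x ≠ ⊤) {G : ℝ≥0∞ → S}
    (hG : ∀ x, G (e x) = x) (x₀ : S) {θ : Measure S}
    (hnat : ∀ B, MeasurableSet B → θ B = ⊤ ∨ ∃ k : ℕ, θ B = k)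
    (hfin : ∀ n, θ (Sn n) < ⊤) :
    psiMeas (phiRaw Sn e G x₀ θ) = θ := by
  set ν := fun n => (θ.restrict (shell Sn n)).map e with hν
  have hshellfin : ∀ n, θ (shell Sn n) ≠ ⊤ :=
    fun n => ((measure_mono (shell_subset Sn n)).trans_lt (hfin n)).ne
  have hνuniv : ∀ n, ν n univ = θ (shell Sn n) := by
    intro n
    rw [hν, he.map_apply, preimage_univ, Measure.restrict_apply_univ]
  have hνapp : ∀ n (B : Set ℝ≥0∞), MeasurableSet B →
      ν n B = θ (e ⁻¹' B ∩ shell Sn n) := by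
    intro n B hB
    rw [hν, he.map_apply, Measure.restrict_apply (he.measurable hB)]
  have hνfin : ∀ n, ν n univ ≠ ⊤ := fun n => by rw [hνuniv n]; exact hshellfin n
  have hνnat : ∀ n (B : Set ℝ≥0∞), MeasurableSet B → ∃ k : ℕ, ν n B = k := by
    intro n B hB
    rw [hνapp n B hB]
    rcases hnat _ ((he.measurable hB).inter (measurableSet_shell hSn n)) with h | h
    · exact absurd (h ▸ measure_mono (inter_subset_right)) (by
        rw [top_le_iff]
        exact fun hc => hshellfin n hc)
    · exact h
  have hνtop : ∀ n, ν n {⊤} = 0 := by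
    intro n
    rw [hνapp n _ (measurableSet_singleton _)]
    have : e ⁻¹' {(⊤ : ℝ≥0∞)} = ∅ := by
      ext x; simp [hetop x]
    simp [this]
  refine Measure.ext fun B hB => ?_
  rw [psiMeas_apply _ hB]
  have hterm : ∀ p : ℕ × ℕ, ((phiRaw Sn e G x₀ θ p).2 : ℝ≥0∞) *
      B.indicator 1 (phiRaw Sn e G x₀ θ p).1 =
      (if 1 ≤ p.2 ∧ (p.2 : ℝ≥0∞) ≤ θ (shell Sn p.1) then
        B.indicator 1 (G (quant (ν p.1) p.2)) else 0) := by
    intro p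
    rw [phiRaw]
    split_ifs with h
    · simp [hν]
    · simp
  simp_rw [hterm]
  rw [ENNReal.tsum_prod (f := fun (n j : ℕ) => if 1 ≤ j ∧ (j : ℝ≥0∞) ≤ θ (shell Sn n) then
        B.indicator 1 (G (quant (ν n) j)) else 0)]
  have hinner : ∀ n : ℕ, (∑' j : ℕ, if 1 ≤ j ∧ (j : ℝ≥0∞) ≤ θ (shell Sn n) then
      B.indicator 1 (G (quant (ν n) j)) else 0) = θ (B ∩ shell Sn n) := by
    intro n
    have hspec := quant_spec (ν n) (hνfin n) (hνnat n) (hνtop n)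
    have himgmeas : MeasurableSet (e '' B) := he.measurableSet_image' hB
    have hrestr : θ (B ∩ shell Sn n) = ν n (e '' B) := by
      rw [hνapp n _ himgmeas, he.injective.preimage_image]
    rw [hrestr]
    conv_rhs => rw [hspec]
    rw [Measure.sum_apply _ himgmeas]
    refine (tsum_congr fun j => ?_).symm
    rw [hνuniv n] at hspec ⊢
    split_ifs with h
    · -- quantile is in the range of `e`
      have hatom : 1 ≤ ν n {quant (ν n) j} :=
        one_le_measure_quant (ν n) (hνfin n) (hνnat n) (hνtop n)
          (by rw [hνuniv n]; exact h)
      have hrange : quant (ν n) j ∈ range e := by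
        by_contra hcon
        have : ν n {quant (ν n) j} ≤ ν n (range e)ᶜ :=
          measure_mono (singleton_subset_iff.mpr hcon)
        rw [hνapp n _ he.measurableSet_range.compl] at this
        have hpre : e ⁻¹' (range e)ᶜ = ∅ := by
          ext x; simp [mem_range_self x]
        rw [hpre, empty_inter, measure_empty] at this
        exact absurd (hatom.trans this) (by simp)
      obtain ⟨y, hy⟩ := hrange
      rw [Measure.dirac_apply' _ himgmeas, ← hy, hG y]
      by_cases hyB : y ∈ B
      · rw [indicator_of_mem (mem_image_of_mem e hyB), indicator_of_mem hyB]
        rfl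
      · rw [indicator_of_notMem (fun hc => hyB ((he.injective.mem_set_image).mp hc)),
          indicator_of_notMem hyB]
    · rfl
  simp_rw [hinner]
  have hBunion : B = ⋃ n, B ∩ shell Sn n := by
    rw [← inter_iUnion, iUnion_shell hexh, inter_univ]
  conv_rhs => rw [hBunion]
  rw [measure_iUnion ?_ (fun n => hB.inter (measurableSet_shell hSn n))]
  exact fun m n hmn => ((pairwise_disjoint_shell hmono) hmn).mono
    inter_subset_right inter_subset_right


/-! ### the measurability layer -/

section Main

variable {Sn : ℕ → Set S}

lemma measurable_eval {B : Set S} (hB : MeasurableSet B) :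
    @Measurable _ _ (evalSigmaAlgebra S Sn) _ (fun θ : NatValuedMeasures S Sn => θ.val B) := by
  rw [measurable_iff_comap_le]
  exact le_iSup₂ (f := fun (B : Set S) (_ : MeasurableSet B) =>
    MeasurableSpace.comap (fun θ : NatValuedMeasures S Sn => θ.val B) inferInstance) B hB

lemma measurable_toM {α : Type*} [mα : MeasurableSpace α] {f : α → NatValuedMeasures S Sn}
    (h : ∀ B : Set S, MeasurableSet B → Measurable (fun a => (f a).val B)) :
    @Measurable _ _ mα (evalSigmaAlgebra S Sn) f := by
  rw [measurable_iff_comap_le, evalSigmaAlgebra, MeasurableSpace.comap_iSup]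
  refine iSup_le fun B => ?_
  rw [MeasurableSpace.comap_iSup]
  refine iSup_le fun hB => ?_
  rw [MeasurableSpace.comap_comp]
  exact measurable_iff_comap_le.mp (h B hB)

/-- the set of admissible configurations. -/
def goodSet (Sn : ℕ → Set S) : Set ((ℕ × ℕ) → S × ℕ) :=
  {s | ∀ n, (∑' p, ((s p).2 : ℝ≥0∞) * (Sn n).indicator 1 (s p).1) ≠ ⊤}

lemma measurable_config_eval {B : Set S} (hB : MeasurableSet B) :
    Measurable (fun s : (ℕ × ℕ) → S × ℕ =>
      ∑' p, ((s p).2 : ℝ≥0∞) * B.indicator 1 (s p).1) := by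
  refine Measurable.ennreal_tsum fun p => Measurable.mul ?_ ?_
  · exact measurable_from_nat.comp (measurable_snd.comp (measurable_pi_apply p))
  · exact (measurable_one.indicator hB).comp (measurable_fst.comp (measurable_pi_apply p))

lemma measurableSet_goodSet (hSn : ∀ n, MeasurableSet (Sn n)) :
    MeasurableSet (goodSet Sn) := by
  have : goodSet Sn = ⋂ n, (fun s : (ℕ × ℕ) → S × ℕ =>
      ∑' p, ((s p).2 : ℝ≥0∞) * (Sn n).indicator 1 (s p).1) ⁻¹' {⊤}ᶜ := by
    ext s; simp [goodSet]
  rw [this]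
  exact MeasurableSet.iInter fun n =>
    measurable_config_eval (hSn n) (measurableSet_singleton _).compl

/-- the map from configurations to `ℕ`-valued measures. -/
noncomputable def psiM (hSn : ∀ n, MeasurableSet (Sn n)) (s : goodSet Sn) :
    NatValuedMeasures S Sn :=
  ⟨psiMeas s.1, psiMeas_natValued s.1, fun n => lt_top_iff_ne_top.mpr (by
    rw [psiMeas_apply s.1 (hSn n)]; exact s.2 n)⟩

lemma psiM_val (hSn : ∀ n, MeasurableSet (Sn n)) (s : goodSet Sn) :
    (psiM hSn s).val = psiMeas s.1 := rfl

lemma measurable_psiM (hSn : ∀ n, MeasurableSet (Sn n)) :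
    @Measurable _ _ _ (evalSigmaAlgebra S Sn) (psiM (Sn := Sn) hSn) := by
  refine measurable_toM fun B hB => ?_
  have : (fun s : goodSet Sn => (psiM hSn s).val B) = (fun s : goodSet Sn =>
      ∑' p, ((s.1 p).2 : ℝ≥0∞) * B.indicator 1 (s.1 p).1) := by
    funext s
    rw [psiM_val, psiMeas_apply s.1 hB]
  rw [this]
  exact (measurable_config_eval hB).comp measurable_subtype_coe


/-- helper: evaluation of a restricted pushforward. -/
lemma map_restrict_apply {e : S → ℝ≥0∞} (he : MeasurableEmbedding e) (θ : Measure S)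
    {A : Set S} (hA : MeasurableSet A) {B : Set ℝ≥0∞} (hB : MeasurableSet B) :
    (θ.restrict A).map e B = θ (e ⁻¹' B ∩ A) := by
  rw [he.map_apply, Measure.restrict_apply (he.measurable hB)]

/-- the map from measures to configurations. -/
noncomputable def phiM (hSn : ∀ n, MeasurableSet (Sn n)) (hmono : Monotone Sn)
    (hexh : ⋃ n, Sn n = univ) {e : S → ℝ≥0∞} (he : MeasurableEmbedding e)
    (hetop : ∀ x, e x ≠ ⊤) {G : ℝ≥0∞ → S} (hG : ∀ x, G (e x) = x) (x₀ : S)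
    (θ : NatValuedMeasures S Sn) : goodSet Sn :=
  ⟨phiRaw Sn e G x₀ θ.val, fun n => by
    rw [← psiMeas_apply _ (hSn n),
      psiMeas_phiRaw hSn hmono hexh he hetop hG x₀ θ.2.1 θ.2.2]
    exact (θ.2.2 n).ne⟩

lemma psiM_phiM (hSn : ∀ n, MeasurableSet (Sn n)) (hmono : Monotone Sn)
    (hexh : ⋃ n, Sn n = univ) {e : S → ℝ≥0∞} (he : MeasurableEmbedding e)
    (hetop : ∀ x, e x ≠ ⊤) {G : ℝ≥0∞ → S} (hG : ∀ x, G (e x) = x) (x₀ : S)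
    (θ : NatValuedMeasures S Sn) :
    psiM hSn (phiM hSn hmono hexh he hetop hG x₀ θ) = θ := by
  refine Subtype.ext ?_
  rw [psiM_val]
  exact psiMeas_phiRaw hSn hmono hexh he hetop hG x₀ θ.2.1 θ.2.2

lemma measurable_phiM (hSn : ∀ n, MeasurableSet (Sn n)) (hmono : Monotone Sn)
    (hexh : ⋃ n, Sn n = univ) {e : S → ℝ≥0∞} (he : MeasurableEmbedding e)
    (hetop : ∀ x, e x ≠ ⊤) {G : ℝ≥0∞ → S} (hG : ∀ x, G (e x) = x)
    (hGmeas : Measurable G) (x₀ : S) :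
    @Measurable _ _ (evalSigmaAlgebra S Sn) _ (phiM hSn hmono hexh he hetop hG x₀) := by
  letI := evalSigmaAlgebra S Sn
  refine Measurable.subtype_mk ?_
  refine measurable_pi_lambda _ fun p => ?_
  have hshell := measurableSet_shell hSn p.1
  have hquant : Measurable (fun θ : NatValuedMeasures S Sn =>
      quant ((θ.val.restrict (shell Sn p.1)).map e) p.2) := by
    classical
    have heq : (fun θ : NatValuedMeasures S Sn =>
        quant ((θ.val.restrict (shell Sn p.1)).map e) p.2) = fun θ =>
        ⨅ (q : ℚ), if (p.2 : ℝ≥0∞) ≤ θ.val (e ⁻¹' Iic (rq q) ∩ shell Sn p.1)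
          then rq q else ⊤ := by
      funext θ
      rw [quant]
      refine iInf_congr fun q => ?_
      rw [map_restrict_apply he θ.val hshell measurableSet_Iic, iInf_eq_if]
    rw [heq]
    refine Measurable.iInf fun q => Measurable.ite ?_ measurable_const measurable_const
    exact (measurable_eval ((he.measurable measurableSet_Iic).inter hshell))
      measurableSet_Ici
  show Measurable fun θ : NatValuedMeasures S Sn => phiRaw Sn e G x₀ θ.val p
  have heq : (fun θ : NatValuedMeasures S Sn => phiRaw Sn e G x₀ θ.val p)
      = fun θ => if 1 ≤ p.2 ∧ (p.2 : ℝ≥0∞) ≤ θ.val (shell Sn p.1) then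
        (G (quant ((θ.val.restrict (shell Sn p.1)).map e) p.2), 1) else (x₀, 0) := rfl
  rw [heq]
  refine Measurable.ite ?_ ((hGmeas.comp hquant).prodMk measurable_const) measurable_const
  have : {θ : NatValuedMeasures S Sn | 1 ≤ p.2 ∧ (p.2 : ℝ≥0∞) ≤ θ.val (shell Sn p.1)} =
      {θ : NatValuedMeasures S Sn | 1 ≤ p.2} ∩
        ((fun θ : NatValuedMeasures S Sn => θ.val (shell Sn p.1)) ⁻¹' Ici (p.2 : ℝ≥0∞)) := by
    ext θ; simp [Set.mem_setOf_eq, and_comm]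
  rw [show {a : NatValuedMeasures S Sn | 1 ≤ p.2 ∧ (p.2 : ℝ≥0∞) ≤ a.val (shell Sn p.1)} = _
    from this]
  exact (MeasurableSet.const _).inter ((measurable_eval hshell) measurableSet_Ici)

end Main

/-! ### transfer lemmas -/

lemma standardBorelSpace_of_equiv {α β : Type*} [MeasurableSpace α] [MeasurableSpace β]
    [StandardBorelSpace β] (f : α ≃ᵐ β) : StandardBorelSpace α := by
  letI := upgradeStandardBorel β
  letI τ : TopologicalSpace α := TopologicalSpace.induced f inferInstance
  haveI : PolishSpace α := f.toEquiv.polishSpace_induced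
  haveI : BorelSpace α := by
    refine ⟨?_⟩
    rw [borel_comap, ← BorelSpace.measurable_eq (α := β)]
    exact f.measurableEmbedding.comap_eq.symm
  infer_instance

lemma measurableSet_fixedPoints {X : Type*} [MeasurableSpace X] [StandardBorelSpace X]
    {R : X → X} (hR : Measurable R) : MeasurableSet {x | R x = x} := by
  obtain ⟨h, hh⟩ := exists_measurableEmbedding_real X
  have : {x | R x = x} = {x | h (R x) = h x} := by
    ext x; exact ⟨fun hx => by simp only [mem_setOf_eq] at hx ⊢; rw [hx],
      fun hx => hh.injective hx⟩
  rw [this]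
  exact measurableSet_eq_fun (hh.measurable.comp hR) hh.measurable

end NVM



end NVMAux

section
open NVM Set

/-- Let `S` be a Polish space with an increasing exhausting sequence `Sn` of measurable
sets. Then the space `M` of `(ℕ ∪ {∞})`-valued measures that are finite on each `Sn`,
equipped with the σ-algebra generated by the evaluation maps, is a Polish (standard
Borel) measurable space: there is a Polish topology on `M` whose Borel σ-algebra is
exactly the evaluation σ-algebra. -/
theorem natValuedMeasures_standardBorel
    (S : Type*) [TopologicalSpace S] [PolishSpace S] [MeasurableSpace S] [BorelSpace S]
    (Sn : ℕ → Set S) (hSn : ∀ n, MeasurableSet (Sn n)) (hmono : Monotone Sn)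
    (hexh : ⋃ n, Sn n = Set.univ) :
    ∃ τ : TopologicalSpace (NatValuedMeasures S Sn),
      @PolishSpace (NatValuedMeasures S Sn) τ ∧
        @borel (NatValuedMeasures S Sn) τ = evalSigmaAlgebra S Sn := by
  letI mM : MeasurableSpace (NatValuedMeasures S Sn) := evalSigmaAlgebra S Sn
  suffices h : StandardBorelSpace (NatValuedMeasures S Sn) by
    obtain ⟨τ, hb, hp⟩ := h.polish
    exact ⟨τ, hp, hb.measurable_eq.symm⟩
  rcases isEmpty_or_nonempty S with hS | hS
  · -- the degenerate case of an empty `S`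
    haveI : Subsingleton (NatValuedMeasures S Sn) :=
      ⟨fun a b => Subtype.ext (Measure.ext fun B _ => by
        rw [Set.eq_empty_of_isEmpty B]; simp)⟩
    haveI : Countable (NatValuedMeasures S Sn) := Subsingleton.to_countable
    haveI : DiscreteMeasurableSpace (NatValuedMeasures S Sn) := ⟨fun s => by
      rcases s.eq_empty_or_nonempty with rfl | ⟨x, hx⟩
      · exact MeasurableSet.empty
      · have : s = Set.univ := eq_univ_of_forall fun y => (Subsingleton.elim x y) ▸ hx
        exact this ▸ MeasurableSet.univ⟩
    infer_instance
  · obtain ⟨x₀⟩ := hS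
    obtain ⟨e₀, he₀⟩ := exists_measurableEmbedding_real S
    set r : ℝ → ℝ≥0∞ := fun x => ENNReal.ofReal (Real.arctan x + 2) with hr
    have harc : ∀ x : ℝ, 0 < Real.arctan x + 2 := by
      intro x
      have h1 : -(Real.pi / 2) < Real.arctan x := Real.neg_pi_div_two_lt_arctan x
      have h2 : Real.pi < 4 := by
        calc Real.pi < 3.15 := Real.pi_lt_d2
        _ < 4 := by norm_num
      linarith
    have hrinj : Function.Injective r := by
      intro a b hab
      rw [hr] at hab
      simp only [ENNReal.ofReal_eq_ofReal_iff (harc a).le (harc b).le] at hab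
      exact Real.arctan_injective (by linarith)
    have hrmeas : Measurable r :=
      ENNReal.measurable_ofReal.comp ((Real.continuous_arctan.measurable).add measurable_const)
    have he : MeasurableEmbedding (r ∘ e₀) :=
      (hrmeas.measurableEmbedding hrinj).comp he₀
    have hetop : ∀ x : S, (r ∘ e₀) x ≠ ⊤ := fun x => ENNReal.ofReal_ne_top
    obtain ⟨G, hGmeas, hGe⟩ := he.exists_measurable_extend measurable_id (fun _ => ⟨x₀⟩)
    have hG : ∀ x : S, G ((r ∘ e₀) x) = x := fun x => congrFun hGe x
    haveI : StandardBorelSpace (goodSet Sn) :=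
      (measurableSet_goodSet hSn).standardBorel
    set Φ := phiM hSn hmono hexh he hetop hG x₀ with hΦ
    set Ψ := psiM (Sn := Sn) hSn with hΨ
    have hretr : ∀ θ, Ψ (Φ θ) = θ := psiM_phiM hSn hmono hexh he hetop hG x₀
    set R : goodSet Sn → goodSet Sn := fun s => Φ (Ψ s) with hR
    have hRmeas : Measurable R :=
      (measurable_phiM hSn hmono hexh he hetop hG hGmeas x₀).comp (measurable_psiM hSn)
    have hfix : MeasurableSet {s : goodSet Sn | R s = s} := measurableSet_fixedPoints hRmeas
    haveI : StandardBorelSpace {s : goodSet Sn | R s = s} := hfix.standardBorel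
    refine standardBorelSpace_of_equiv
      (β := {s : goodSet Sn | R s = s})
      { toFun := fun θ => ⟨Φ θ, show R (Φ θ) = Φ θ from congrArg Φ (hretr θ)⟩
        invFun := fun s => Ψ s.1
        left_inv := hretr
        right_inv := fun s => Subtype.ext s.2
        measurable_toFun :=
          (measurable_phiM hSn hmono hexh he hetop hG hGmeas x₀).subtype_mk
        measurable_invFun := (measurable_psiM hSn).comp measurable_subtype_coe }

end
end

section
/- Let S be a Polish space with Borel σ-algebra 𝒮 and let ν be a σ-finite measure on (S, 𝒮) (so there exist S_n ∈ 𝒮 with S_n ↑ S and ν(S_n) < ∞ for all n). Let (Ω, ℱ, ℙ) and (Ω♯, ℱ♯, ℙ♯) be probability spaces carrying measurable maps η : Ω → Measure(S) and η♯ : Ω♯ → Measure(S) (the space of measures on S carrying the σ-algebra generated by the evaluation maps θ ↦ θ(B), B ∈ 𝒮), each of which is a Poisson random measure with intensity ν, i.e.: a.e. realization is an (ℕ ∪ {∞})-valued measure; for every B ∈ 𝒮 with ν(B) < ∞ the random variable given by evaluation at B is Poisson with parameter ν(B), and for ν(B) = ∞ it equals ∞ a.s.; and evaluations at pairwise disjoint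 measurable sets are mutually independent. Then η and η♯ have the same law: the pushforward of ℙ under η equals the pushforward of ℙ♯ under η♯ as measures on Measure(S). -/
open MeasureTheory ProbabilityTheory
open scoped ENNReal Classical

/-- `η : Ω → Measure S` is a Poisson random measure over the probability measure `P`
with intensity `ν` if: it is measurable (w.r.t. the σ-algebra on `Measure S` generated
by the evaluation maps), a.e. realization is an `(ℕ ∪ {∞})`-valued measure, for every
measurable `B` with `ν B < ∞` the evaluation `η(·)(B)` is Poisson distributed with
parameter `ν B` (and `= ∞` a.s. whenever `ν B = ∞`), and evaluations at pairwise
disjoint measurable sets are mutually independent. -/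
def IsPoissonRandomMeasure {S Ω : Type*} [MeasurableSpace S] [MeasurableSpace Ω]
    (P : Measure Ω) (ν : Measure S) (η : Ω → Measure S) : Prop :=
  Measurable η ∧
  (∀ᵐ ω ∂P, ∀ B : Set S, MeasurableSet B → η ω B = ⊤ ∨ ∃ k : ℕ, η ω B = k) ∧
  (∀ B : Set S, MeasurableSet B → ν B < ⊤ → ∀ k : ℕ,
    P {ω | η ω B = k} =
      ENNReal.ofReal (Real.exp (-(ν B).toReal)) * (ν B) ^ k / (Nat.factorial k)) ∧
  (∀ B : Set S, MeasurableSet B → ν B = ⊤ → ∀ᵐ ω ∂P, η ω B = ⊤) ∧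
  (∀ (n : ℕ) (B : Fin n → Set S), (∀ i, MeasurableSet (B i)) →
    Pairwise (Function.onFun Disjoint B) →
    iIndepFun (fun i ω => η ω (B i)) P)


namespace PoissonUnique


/-- The countable set `ℕ ∪ {∞}` inside `ℝ≥0∞`. -/
def natTop : Set ℝ≥0∞ := insert ⊤ (Set.range ((↑) : ℕ → ℝ≥0∞))

lemma natTop_countable : natTop.Countable :=
  (Set.countable_range _).insert _

lemma natTop_measurable : MeasurableSet natTop :=
  natTop_countable.measurableSet

lemma measure_range_nat (m : Measure ℝ≥0∞) :
    m (Set.range ((↑) : ℕ → ℝ≥0∞)) = ∑' k : ℕ, m {((k : ℕ) : ℝ≥0∞)} := by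
  rw [Set.range_eq_iUnion]
  exact measure_iUnion
    (fun i j hij => by
      simp only [Function.onFun, Set.disjoint_singleton]
      exact fun h => hij (Nat.cast_injective h))
    (fun i => measurableSet_singleton _)

/-- Evaluation formula for a measure supported on `ℕ ∪ {∞}`. -/
lemma measure_eval (m : Measure ℝ≥0∞) (hm : m natTopᶜ = 0) {s : Set ℝ≥0∞} :
    m s = (∑' k : {k : ℕ | ((k : ℕ) : ℝ≥0∞) ∈ s}, m {((k : ℝ≥0∞))}) +
      (if ⊤ ∈ s then m {⊤} else 0) := by
  have h1 : m (s \ natTop) = 0 :=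
    measure_mono_null (Set.diff_subset_compl s natTop) hm
  have h2 : m s = m (s ∩ natTop) := by
    rw [← measure_inter_add_diff s natTop_measurable, h1, add_zero]
  have h3 : s ∩ natTop = (if ⊤ ∈ s then {⊤} else ∅) ∪
      (⋃ k : {k : ℕ | ((k : ℕ) : ℝ≥0∞) ∈ s}, {((k : ℝ≥0∞))}) := by
    ext x
    simp only [natTop, Set.mem_inter_iff, Set.mem_insert_iff, Set.mem_range, Set.mem_union,
      Set.mem_iUnion, Set.mem_singleton_iff]
    constructor
    · rintro ⟨hxs, (rfl | ⟨k, rfl⟩)⟩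
      · left; simp [hxs]
      · right; exact ⟨⟨k, hxs⟩, rfl⟩
    · rintro (hx | ⟨⟨k, hk⟩, rfl⟩)
      · split_ifs at hx with h
        · simp only [Set.mem_singleton_iff] at hx; subst hx; exact ⟨h, Or.inl rfl⟩
        · exact absurd hx (Set.notMem_empty x)
      · exact ⟨hk, Or.inr ⟨k, rfl⟩⟩
  have hdisj : Disjoint (if ⊤ ∈ s then ({⊤} : Set ℝ≥0∞) else ∅)
      (⋃ k : {k : ℕ | ((k : ℕ) : ℝ≥0∞) ∈ s}, {((k : ℝ≥0∞))}) := by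
    split_ifs
    · rw [Set.disjoint_left]
      rintro x rfl hx
      simp only [Set.mem_iUnion, Set.mem_singleton_iff] at hx
      obtain ⟨k, hk⟩ := hx
      exact (ENNReal.natCast_ne_top k) hk.symm
    · exact Set.disjoint_left.2 (fun x hx => absurd hx (Set.notMem_empty x))
  have hmeasU : MeasurableSet (⋃ k : {k : ℕ | ((k : ℕ) : ℝ≥0∞) ∈ s}, {((k : ℝ≥0∞))}) :=
    MeasurableSet.iUnion fun k => measurableSet_singleton _
  rw [h2, h3, measure_union hdisj hmeasU]
  rw [measure_iUnion
    (fun i j hij => by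
      simp only [Function.onFun, Set.disjoint_singleton]
      exact fun h => hij (Subtype.ext (Nat.cast_injective h)))
    (fun i => measurableSet_singleton _)]
  rw [add_comm]
  congr 1
  split_ifs <;> simp

/-- Two probability measures on `ℝ≥0∞` supported on `ℕ ∪ {∞}` with the same masses on
natural-number singletons are equal. -/
lemma ennreal_measure_ext (μ μ' : Measure ℝ≥0∞) [IsProbabilityMeasure μ]
    [IsProbabilityMeasure μ'] (hμ : μ natTopᶜ = 0) (hμ' : μ' natTopᶜ = 0)
    (hk : ∀ k : ℕ, μ {((k : ℕ) : ℝ≥0∞)} = μ' {((k : ℕ) : ℝ≥0∞)}) : μ = μ' := by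
  have htop : μ {⊤} = μ' {⊤} := by
    have h1 : μ natTop = 1 := by
      have := measure_add_measure_compl (μ := μ) natTop_measurable
      rw [hμ, add_zero] at this; rw [this]; exact measure_univ
    have h1' : μ' natTop = 1 := by
      have := measure_add_measure_compl (μ := μ') natTop_measurable
      rw [hμ', add_zero] at this; rw [this]; exact measure_univ
    have hins : ∀ (m : Measure ℝ≥0∞), m natTop = m {⊤} + m (Set.range ((↑) : ℕ → ℝ≥0∞)) := by
      intro m
      rw [natTop, Set.insert_eq, measure_union ?_ ((Set.countable_range _).measurableSet)]
      rw [Set.disjoint_left]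
      rintro x rfl ⟨k, hk⟩
      exact (ENNReal.natCast_ne_top k) hk
    have hsum : μ (Set.range ((↑) : ℕ → ℝ≥0∞)) = μ' (Set.range ((↑) : ℕ → ℝ≥0∞)) := by
      rw [measure_range_nat, measure_range_nat]
      exact tsum_congr hk
    have e1 : μ {⊤} + μ (Set.range ((↑) : ℕ → ℝ≥0∞)) = 1 := by rw [← hins, h1]
    have e2 : μ' {⊤} + μ (Set.range ((↑) : ℕ → ℝ≥0∞)) = 1 := by rw [hsum, ← hins, h1']
    have hfin : μ (Set.range ((↑) : ℕ → ℝ≥0∞)) ≠ ⊤ :=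
      (measure_lt_top μ _).ne
    exact WithTop.add_right_cancel hfin (e1.trans e2.symm)
  ext s hs
  rw [measure_eval μ hμ, measure_eval μ' hμ']
  congr 1
  · exact tsum_congr (fun k => hk k)
  · split_ifs <;> simp [htop]



variable {S Ω Ω' : Type*} [MeasurableSpace S] [MeasurableSpace Ω] [MeasurableSpace Ω']
variable {P : Measure Ω} {P' : Measure Ω'} {ν : Measure S} {η : Ω → Measure S} {η' : Ω' → Measure S}

lemma eval_measurable (hη : Measurable η) {B : Set S} (hB : MeasurableSet B) :
    Measurable (fun ω => η ω B) :=
  (Measure.measurable_coe hB).comp hη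

lemma map_compl_natTop (hη : IsPoissonRandomMeasure P ν η) {B : Set S} (hB : MeasurableSet B) :
    Measure.map (fun ω => η ω B) P natTopᶜ = 0 := by
  rw [Measure.map_apply (eval_measurable hη.1 hB) natTop_measurable.compl]
  have hae : ∀ᵐ ω ∂P, η ω B ∈ natTop := by
    filter_upwards [hη.2.1] with ω h
    rcases h B hB with h' | ⟨k, h'⟩
    · rw [h']; exact Set.mem_insert _ _
    · rw [h']; exact Set.mem_insert_of_mem _ ⟨k, rfl⟩
  have := ae_iff.mp hae
  exact this

lemma map_singleton (hη : IsPoissonRandomMeasure P ν η) [IsProbabilityMeasure P] {B : Set S}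
    (hB : MeasurableSet B) (k : ℕ) :
    Measure.map (fun ω => η ω B) P {((k : ℕ) : ℝ≥0∞)} =
      if ν B < ⊤ then
        ENNReal.ofReal (Real.exp (-(ν B).toReal)) * (ν B) ^ k / (Nat.factorial k)
      else 0 := by
  rw [Measure.map_apply (eval_measurable hη.1 hB) (measurableSet_singleton _)]
  have hpre : (fun ω => η ω B) ⁻¹' {((k : ℕ) : ℝ≥0∞)} = {ω | η ω B = k} := by
    ext ω; simp [Set.mem_preimage]
  rw [hpre]
  split_ifs with h
  · exact hη.2.2.1 B hB h k
  · have hae := hη.2.2.2.1 B hB (top_le_iff.mp (not_lt.mp h))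
    have : {ω | η ω B = (k : ℝ≥0∞)} ⊆ {ω | ¬ (η ω B = ⊤)} := by
      intro ω hω
      simp only [Set.mem_setOf_eq] at hω ⊢
      rw [hω]
      exact ENNReal.natCast_ne_top k
    exact measure_mono_null this (by simpa only [ae_iff] using hae)

/-- Marginal laws of two Poisson random measures with the same intensity agree. -/
lemma marginal_eq [IsProbabilityMeasure P] [IsProbabilityMeasure P']
    (hη : IsPoissonRandomMeasure P ν η) (hη' : IsPoissonRandomMeasure P' ν η') {B : Set S} (hB : MeasurableSet B) :
    Measure.map (fun ω => η ω B) P = Measure.map (fun ω => η' ω B) P' := by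
  haveI : IsProbabilityMeasure (Measure.map (fun ω => η ω B) P) :=
    Measure.isProbabilityMeasure_map (eval_measurable hη.1 hB).aemeasurable
  haveI : IsProbabilityMeasure (Measure.map (fun ω => η' ω B) P') :=
    Measure.isProbabilityMeasure_map (eval_measurable hη'.1 hB).aemeasurable
  refine ennreal_measure_ext _ _ (map_compl_natTop hη hB) (map_compl_natTop hη' hB) ?_
  intro k
  rw [map_singleton hη hB k, map_singleton hη' hB k]

/-- The joint law of evaluations at finitely many pairwise disjoint measurable sets is
the product of the marginal laws. -/
lemma joint_eq_pi [IsProbabilityMeasure P] (hη : IsPoissonRandomMeasure P ν η)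
    {ι : Type*} [Fintype ι] (D : ι → Set S) (hD : ∀ i, MeasurableSet (D i))
    (hdisj : Pairwise (Function.onFun Disjoint D)) :
    Measure.map (fun ω i => η ω (D i)) P =
      Measure.pi (fun i => Measure.map (fun ω => η ω (D i)) P) := by
  haveI : ∀ i, IsProbabilityMeasure (Measure.map (fun ω => η ω (D i)) P) :=
    fun i => Measure.isProbabilityMeasure_map (eval_measurable hη.1 (hD i)).aemeasurable
  have hvec : Measurable (fun ω i => η ω (D i)) :=
    measurable_pi_lambda _ fun i => eval_measurable hη.1 (hD i)
  let e := Fintype.equivFin ι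
  have hInd := hη.2.2.2.2 (Fintype.card ι) (fun j => D (e.symm j))
    (fun j => hD _) (fun j j' hjj' => hdisj (e.symm.injective.ne hjj'))
  refine (Measure.pi_eq ?_).symm
  intro s hs
  rw [Measure.map_apply hvec (MeasurableSet.univ_pi hs)]
  have hpre : (fun ω i => η ω (D i)) ⁻¹' (Set.pi Set.univ s) =
      ⋂ i, (fun ω => η ω (D i)) ⁻¹' s i := by
    ext ω; simp [Set.mem_pi]
  rw [hpre]
  have key := hInd.measure_inter_preimage_eq_mul (S := Finset.univ)
    (sets := fun j => s (e.symm j)) (fun j _ => hs _)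
  simp only [Finset.mem_univ, Set.iInter_true] at key
  have hL : (⋂ i, (fun ω => η ω (D i)) ⁻¹' s i) =
      ⋂ j, (fun ω => η ω (D (e.symm j))) ⁻¹' s (e.symm j) :=
    (e.symm.surjective.iInter_comp fun i => (fun ω => η ω (D i)) ⁻¹' s i).symm
  rw [hL]
  calc P (⋂ j, (fun ω => η ω (D (e.symm j))) ⁻¹' s (e.symm j))
      = ∏ j, P ((fun ω => η ω (D (e.symm j))) ⁻¹' s (e.symm j)) := by
        simpa using key
    _ = ∏ i, P ((fun ω => η ω (D i)) ⁻¹' s i) :=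
        Equiv.prod_comp e.symm fun i => P ((fun ω => η ω (D i)) ⁻¹' s i)
    _ = ∏ i, Measure.map (fun ω => η ω (D i)) P (s i) := by
        refine Finset.prod_congr rfl fun i _ => ?_
        rw [Measure.map_apply (eval_measurable hη.1 (hD i)) (hs i)]



variable {S Ω Ω' : Type*} [MeasurableSpace S] [MeasurableSpace Ω] [MeasurableSpace Ω']
variable {P : Measure Ω} {P' : Measure Ω'} {ν : Measure S} {η : Ω → Measure S} {η' : Ω' → Measure S}

/-- Finite-dimensional distributions agree. -/
lemma fdd_eq [IsProbabilityMeasure P] [IsProbabilityMeasure P']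
    (hη : IsPoissonRandomMeasure P ν η) (hη' : IsPoissonRandomMeasure P' ν η')
    (n : ℕ) (B : Fin n → Set S) (hB : ∀ i, MeasurableSet (B i)) :
    Measure.map (fun ω i => η ω (B i)) P = Measure.map (fun ω i => η' ω (B i)) P' := by
  classical
  -- atoms of the algebra generated by the `B i`
  let D : (Fin n → Bool) → Set S := fun σ => ⋂ i, (bif σ i then B i else (B i)ᶜ)
  have hDmeas : ∀ σ, MeasurableSet (D σ) := by
    intro σ
    refine MeasurableSet.iInter fun i => ?_
    cases h : σ i <;> simp [h, hB i, (hB i).compl]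
  have hDdisj : Pairwise (Function.onFun Disjoint D) := by
    intro σ τ hστ
    obtain ⟨i, hi⟩ : ∃ i, σ i ≠ τ i := by
      by_contra h
      push_neg at h
      exact hστ (funext h)
    rw [Function.onFun, Set.disjoint_left]
    intro x hxσ hxτ
    have h1 : x ∈ (bif σ i then B i else (B i)ᶜ) := Set.mem_iInter.mp hxσ i
    have h2 : x ∈ (bif τ i then B i else (B i)ᶜ) := Set.mem_iInter.mp hxτ i
    cases hσi : σ i <;> cases hτi : τ i
    · exact hi (hσi.trans hτi.symm)
    · rw [hσi] at h1; rw [hτi] at h2; exact h1 h2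
    · rw [hσi] at h1; rw [hτi] at h2; exact h2 h1
    · exact hi (hσi.trans hτi.symm)
  -- decomposition of each `B i` as a finite disjoint union of atoms
  have hBdecomp : ∀ i, B i = ⋃ σ ∈ Finset.univ.filter (fun σ => σ i = true), D σ := by
    intro i
    ext x
    simp only [Set.mem_iUnion, Finset.mem_filter, Finset.mem_univ, true_and,
      exists_prop]
    constructor
    · intro hx
      refine ⟨fun j => decide (x ∈ B j), by simp [hx], ?_⟩
      refine Set.mem_iInter.mpr fun j => ?_
      by_cases hj : x ∈ B j <;> simp [D, hj]
    · rintro ⟨σ, hσi, hxσ⟩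
      have := Set.mem_iInter.mp hxσ i
      rwa [hσi] at this
  have hdecomp : ∀ (θ : Measure S) (i : Fin n),
      θ (B i) = ∑ σ ∈ Finset.univ.filter (fun σ => σ i = true), θ (D σ) := by
    intro θ i
    rw [hBdecomp i]
    exact measure_biUnion_finset
      (fun σ hσ τ hτ hστ => hDdisj hστ) (fun σ _ => hDmeas σ)
  -- the vector of evaluations at the `B i` is a measurable function of the atom vector
  let T : ((Fin n → Bool) → ℝ≥0∞) → Fin n → ℝ≥0∞ := fun v i =>
    ∑ σ ∈ Finset.univ.filter (fun σ => σ i = true), v σ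
  have hT : Measurable T :=
    measurable_pi_lambda _ fun i => Finset.measurable_sum _ fun σ _ => measurable_pi_apply σ
  have hcompη : (fun ω i => η ω (B i)) = T ∘ (fun ω σ => η ω (D σ)) := by
    funext ω i; exact hdecomp (η ω) i
  have hcompη' : (fun ω i => η' ω (B i)) = T ∘ (fun ω σ => η' ω (D σ)) := by
    funext ω i; exact hdecomp (η' ω) i
  have hvec : Measurable (fun ω σ => η ω (D σ)) :=
    measurable_pi_lambda _ fun σ => eval_measurable hη.1 (hDmeas σ)
  have hvec' : Measurable (fun ω σ => η' ω (D σ)) :=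
    measurable_pi_lambda _ fun σ => eval_measurable hη'.1 (hDmeas σ)
  rw [hcompη, hcompη', ← Measure.map_map hT hvec, ← Measure.map_map hT hvec']
  congr 1
  rw [joint_eq_pi hη D hDmeas hDdisj, joint_eq_pi hη' D hDmeas hDdisj]
  congr 1
  funext σ
  exact marginal_eq hη hη' (hDmeas σ)

/-- Uniqueness of the law. -/
theorem unique_law [IsProbabilityMeasure P] [IsProbabilityMeasure P']
    (hη : IsPoissonRandomMeasure P ν η) (hη' : IsPoissonRandomMeasure P' ν η') :
    Measure.map η P = Measure.map η' P' := by
  classical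
  haveI : IsProbabilityMeasure (Measure.map η P) := Measure.isProbabilityMeasure_map hη.1.aemeasurable
  haveI : IsProbabilityMeasure (Measure.map η' P') := Measure.isProbabilityMeasure_map hη'.1.aemeasurable
  set C : Set (Set (Measure S)) := piiUnionInter
    (fun B => {t | MeasurableSet[MeasurableSpace.comap (fun μ : Measure S => μ B)
      ENNReal.measurableSpace] t}) {B : Set S | MeasurableSet B} with hC
  have h_gen : (Measure.instMeasurableSpace : MeasurableSpace (Measure S)) =
      MeasurableSpace.generateFrom C := by
    rw [hC]
    exact (generateFrom_piiUnionInter_measurableSet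
      (fun B : Set S => MeasurableSpace.comap (fun μ : Measure S => μ B)
        ENNReal.measurableSpace) {B : Set S | MeasurableSet B}).symm
  have h_pi : IsPiSystem C := by
    rw [hC]
    exact isPiSystem_piiUnionInter _
      (fun B => @MeasurableSpace.isPiSystem_measurableSet _
        (MeasurableSpace.comap (fun μ : Measure S => μ B) ENNReal.measurableSpace)) _
  refine MeasureTheory.ext_of_generate_finite C h_gen h_pi ?_ (by simp)
  rintro t ⟨p, hpS, f, hf, rfl⟩
  rw [← Finset.set_biInter_coe]
  -- enumerate the finite set `p` of measurable sets of `S`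
  let e := p.equivFin
  set m := p.card
  let g : Fin m → Set S := fun i => (e.symm i : Set S)
  have hg : ∀ i, MeasurableSet (g i) := fun i => hpS (e.symm i).2
  have hfg : ∀ i : Fin m, ∃ A : Set ℝ≥0∞, MeasurableSet A ∧
      (fun μ : Measure S => μ (g i)) ⁻¹' A = f (g i) := fun i => hf (g i) (e.symm i).2
  choose A hA1 hA2 using hfg
  -- rewrite the set `⋂ B ∈ p, f B` through the enumeration
  have ht_eq : (⋂ B ∈ (p : Set (Set S)), f B) = ⋂ i, f (g i) := by
    rw [Set.biInter_eq_iInter]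
    exact (e.symm.surjective.iInter_comp fun b : p => f (b : Set S)).symm
  have ht_meas : MeasurableSet (⋂ B ∈ (p : Set (Set S)), f B) := by
    rw [ht_eq]
    refine MeasurableSet.iInter fun i => ?_
    rw [← hA2 i]
    exact (Measure.measurable_coe (hg i)) (hA1 i)
  have hpre1 : η ⁻¹' (⋂ B ∈ (p : Set (Set S)), f B) =
      (fun ω i => η ω (g i)) ⁻¹' Set.pi Set.univ A := by
    rw [ht_eq]
    ext ω
    simp only [Set.mem_preimage, Set.mem_iInter, Set.mem_pi, Set.mem_univ, true_implies]
    constructor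
    · intro h i
      have := h i
      rw [← hA2 i] at this
      exact this
    · intro h i
      rw [← hA2 i]
      exact h i
  have hpre2 : η' ⁻¹' (⋂ B ∈ (p : Set (Set S)), f B) =
      (fun ω i => η' ω (g i)) ⁻¹' Set.pi Set.univ A := by
    rw [ht_eq]
    ext ω
    simp only [Set.mem_preimage, Set.mem_iInter, Set.mem_pi, Set.mem_univ, true_implies]
    constructor
    · intro h i
      have := h i
      rw [← hA2 i] at this
      exact this
    · intro h i
      rw [← hA2 i]
      exact h i
  have hApi : MeasurableSet (Set.pi Set.univ A) := MeasurableSet.univ_pi hA1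
  have hvec : Measurable (fun ω i => η ω (g i)) :=
    measurable_pi_lambda _ fun i => eval_measurable hη.1 (hg i)
  have hvec' : Measurable (fun ω i => η' ω (g i)) :=
    measurable_pi_lambda _ fun i => eval_measurable hη'.1 (hg i)
  rw [Measure.map_apply hη.1 ht_meas, Measure.map_apply hη'.1 ht_meas, hpre1, hpre2,
    ← Measure.map_apply hvec hApi, ← Measure.map_apply hvec' hApi,
    fdd_eq hη hη' m g hg]


end PoissonUnique

/-- Uniqueness in law of Poisson random measures: two Poisson random measures with the
same σ-finite intensity `ν` on a Polish space `S`, possibly defined over different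
probability spaces, have the same law on the space of measures on `S`. -/
theorem poisson_random_measure_unique_law
    (S : Type) [TopologicalSpace S] [PolishSpace S] [MeasurableSpace S] [BorelSpace S]
    (ν : Measure S) [SigmaFinite ν]
    {Ω Ω' : Type*} [MeasurableSpace Ω] [MeasurableSpace Ω']
    (P : Measure Ω) (P' : Measure Ω')
    [IsProbabilityMeasure P] [IsProbabilityMeasure P']
    (η : Ω → Measure S) (η' : Ω' → Measure S)
    (hη : IsPoissonRandomMeasure P ν η) (hη' : IsPoissonRandomMeasure P' ν η') :
    Measure.map η P = Measure.map η' P' := by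
  exact PoissonUnique.unique_law hη hη'
end
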